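/- For every nonnegative integer l, the number of 2×2 nonnegative integer matrices with both row sums and both column sums at most l equals (1/6)(l+1)(l+2)(l^2+3l+3); equivalently, 6·G_2(l) = (l+1)(l+2)(l^2+3l+3). -/
import Mathlib


/-- `G k l`: the number of `k × k` matrices with nonnegative integer entries
such that every row sum and every column sum is at most `l`. -/
noncomputable def G (k l : ℕ) : ℕ :=
  Nat.card {A : Matrix (Fin k) (Fin k) ℕ //
    (∀ i, ∑ j', A i j' ≤ l) ∧ (∀ j', ∑ i, A i j' ≤ l)}

open Finset

private lemma tri (a : ℕ) : 2 * ∑ c ∈ range a, (c + 1) = a * (a + 1) := by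
  induction a with
  | zero => simp
  | succ n ih => rw [Finset.sum_range_succ, Nat.mul_add, ih]; ring

private lemma countd (l y : ℕ) :
    ∑ x ∈ range (l+1), (if y + x ≤ l then 1 else 0) = l + 1 - y := by
  rw [← Finset.card_filter]
  have h : (range (l+1)).filter (fun x => y + x ≤ l) = range (l+1-y) := by
    ext x; simp only [Finset.mem_filter, Finset.mem_range]; omega
  rw [h, Finset.card_range]

private lemma countT (l : ℕ) : 2 * ∑ c ∈ range (l+1), (l+1-c) = (l+1)*(l+2) := by
  have h := Finset.sum_range_reflect (fun c => l+1-c) (l+1)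
  have h2 : ∑ j ∈ range (l+1), (l+1-(l+1-1-j)) = ∑ j ∈ range (l+1), (j+1) := by
    refine Finset.sum_congr rfl fun j hj => ?_
    rw [Finset.mem_range] at hj; omega
  rw [← h, h2, tri]

private lemma countB (l a : ℕ) (ha : a ≤ l) :
    2 * ∑ c ∈ range (l+1), (if l+1 ≤ a+c then (l+1-c) else 0) = a*(a+1) := by
  have h := Finset.sum_range_reflect (fun c => if l+1 ≤ a+c then (l+1-c) else 0) (l+1)
  have h2 : ∑ j ∈ range (l+1), (if l+1 ≤ a+(l+1-1-j) then (l+1-(l+1-1-j)) else 0)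
      = ∑ j ∈ range (l+1), (if j+1 ≤ a then (j+1) else 0) := by
    refine Finset.sum_congr rfl fun j hj => ?_
    rw [Finset.mem_range] at hj
    split_ifs <;> omega
  rw [← h, h2]
  have h3 : ∑ j ∈ range (l+1), (if j+1 ≤ a then (j+1) else 0)
      = ∑ j ∈ range a, (j+1) := by
    rw [← Finset.sum_filter]
    congr 1
    ext x; simp only [Finset.mem_filter, Finset.mem_range]; omega
  rw [h3, tri]

private lemma inner2 (l a b : ℕ) (hab : a + b ≤ l) :
    2 * (∑ c ∈ range (l+1), ∑ d ∈ range (l+1),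
      (if a+b ≤ l ∧ c+d ≤ l ∧ a+c ≤ l ∧ b+d ≤ l then 1 else 0)) + a*(a+1) + b*(b+1)
    = (l+1)*(l+2) := by
  have point : ∀ c d : ℕ,
      (if a+b ≤ l ∧ c+d ≤ l ∧ a+c ≤ l ∧ b+d ≤ l then 1 else 0)
      + ((if c+d ≤ l ∧ l+1 ≤ a+c then 1 else 0)
      + (if c+d ≤ l ∧ l+1 ≤ b+d then 1 else 0))
      = (if c+d ≤ l then 1 else 0) := by
    intro c d; split_ifs <;> omega
  have hsum : (∑ c ∈ range (l+1), ∑ d ∈ range (l+1),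
        (if a+b ≤ l ∧ c+d ≤ l ∧ a+c ≤ l ∧ b+d ≤ l then 1 else 0))
      + ((∑ c ∈ range (l+1), ∑ d ∈ range (l+1), (if c+d ≤ l ∧ l+1 ≤ a+c then 1 else 0))
      + (∑ c ∈ range (l+1), ∑ d ∈ range (l+1), (if c+d ≤ l ∧ l+1 ≤ b+d then 1 else 0)))
      = ∑ c ∈ range (l+1), ∑ d ∈ range (l+1), (if c+d ≤ l then 1 else 0) := by
    rw [← Finset.sum_add_distrib, ← Finset.sum_add_distrib]
    refine Finset.sum_congr rfl fun c _ => ?_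
    rw [← Finset.sum_add_distrib, ← Finset.sum_add_distrib]
    exact Finset.sum_congr rfl fun d _ => point c d
  have hSA : ∑ c ∈ range (l+1), ∑ d ∈ range (l+1), (if c+d ≤ l then 1 else 0)
      = ∑ c ∈ range (l+1), (l+1-c) :=
    Finset.sum_congr rfl fun c _ => countd l c
  have hSB : ∑ c ∈ range (l+1), ∑ d ∈ range (l+1), (if c+d ≤ l ∧ l+1 ≤ a+c then 1 else 0)
      = ∑ c ∈ range (l+1), (if l+1 ≤ a+c then (l+1-c) else 0) := by
    refine Finset.sum_congr rfl fun c _ => ?_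
    by_cases hc : l+1 ≤ a+c
    · simp only [hc, and_true, if_true]; exact countd l c
    · simp [hc]
  have hSC : ∑ c ∈ range (l+1), ∑ d ∈ range (l+1), (if c+d ≤ l ∧ l+1 ≤ b+d then 1 else 0)
      = ∑ d ∈ range (l+1), (if l+1 ≤ b+d then (l+1-d) else 0) := by
    rw [Finset.sum_comm]
    refine Finset.sum_congr rfl fun d _ => ?_
    by_cases hd : l+1 ≤ b+d
    · simp only [hd, and_true, if_true]
      rw [← countd l d]
      exact Finset.sum_congr rfl fun c _ => by rw [add_comm c d]
    · simp [hd]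
  have h2SA := countT l
  have h2SB := countB l a (by omega)
  have h2SC := countB l b (by omega)
  rw [hSA, hSB, hSC] at hsum
  omega

private lemma sumE (m : ℕ) : 3 * ∑ a ∈ range (m+1), (a*(a+1)) = m*(m+1)*(m+2) := by
  induction m with
  | zero => simp
  | succ n ih => rw [Finset.sum_range_succ, Nat.mul_add, ih]; ring

private lemma sumD (l : ℕ) :
    12 * ∑ a ∈ range (l+1), (a*(a+1)*(l+1-a)) = l*(l+1)*(l+2)*(l+3) := by
  induction l with
  | zero => simp
  | succ n ih =>
    have h1 : ∑ a ∈ range (n+2), (a*(a+1)*(n+2-a))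
        = ∑ a ∈ range (n+2), (a*(a+1)*(n+1-a) + a*(a+1)) := by
      refine Finset.sum_congr rfl fun a ha => ?_
      rw [Finset.mem_range] at ha
      have : n + 2 - a = (n + 1 - a) + 1 := by omega
      rw [this]; ring
    rw [h1, Finset.sum_add_distrib, Finset.sum_range_succ (f := fun a => a*(a+1)*(n+1-a))]
    have h2 : (n+1)*((n+1)+1)*(n+1-(n+1)) = 0 := by simp
    rw [h2, add_zero]
    have := sumE (n+1)
    nlinarith [ih, this]

private lemma key (l : ℕ) :
    12 * (∑ a ∈ range (l+1), ∑ b ∈ range (l+1), ∑ c ∈ range (l+1), ∑ d ∈ range (l+1),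
      (if a+b ≤ l ∧ c+d ≤ l ∧ a+c ≤ l ∧ b+d ≤ l then 1 else 0))
    = 2*(l+1)*(l+2)*(l^2+3*l+3) := by
  have point : ∀ a b : ℕ,
      2 * (∑ c ∈ range (l+1), ∑ d ∈ range (l+1),
        (if a+b ≤ l ∧ c+d ≤ l ∧ a+c ≤ l ∧ b+d ≤ l then 1 else 0))
      + (if a+b ≤ l then a*(a+1) + b*(b+1) else 0)
      = (if a+b ≤ l then (l+1)*(l+2) else 0) := by
    intro a b
    by_cases hab : a + b ≤ l
    · rw [if_pos hab, if_pos hab]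
      have := inner2 l a b hab
      omega
    · rw [if_neg hab, if_neg hab, add_zero]
      have hz : (∑ c ∈ range (l+1), ∑ d ∈ range (l+1),
          (if a+b ≤ l ∧ c+d ≤ l ∧ a+c ≤ l ∧ b+d ≤ l then 1 else 0)) = 0 := by
        refine Finset.sum_eq_zero fun c _ => Finset.sum_eq_zero fun d _ => ?_
        exact if_neg (fun h => hab h.1)
      rw [hz]
  have hsum :
      2 * (∑ a ∈ range (l+1), ∑ b ∈ range (l+1), ∑ c ∈ range (l+1), ∑ d ∈ range (l+1),
        (if a+b ≤ l ∧ c+d ≤ l ∧ a+c ≤ l ∧ b+d ≤ l then 1 else 0))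
      + (∑ a ∈ range (l+1), ∑ b ∈ range (l+1), (if a+b ≤ l then a*(a+1) + b*(b+1) else 0))
      = ∑ a ∈ range (l+1), ∑ b ∈ range (l+1), (if a+b ≤ l then (l+1)*(l+2) else 0) := by
    rw [Finset.mul_sum, ← Finset.sum_add_distrib]
    refine Finset.sum_congr rfl fun a _ => ?_
    rw [Finset.mul_sum, ← Finset.sum_add_distrib]
    exact Finset.sum_congr rfl fun b _ => point a b
  have hR : ∑ a ∈ range (l+1), ∑ b ∈ range (l+1), (if a+b ≤ l then (l+1)*(l+2) else 0)
      = (l+1)*(l+2) * ∑ a ∈ range (l+1), (l+1-a) := by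
    rw [Finset.mul_sum]
    refine Finset.sum_congr rfl fun a _ => ?_
    rw [← countd l a, Finset.mul_sum]
    refine Finset.sum_congr rfl fun b _ => ?_
    split_ifs <;> simp
  have hM : ∑ a ∈ range (l+1), ∑ b ∈ range (l+1), (if a+b ≤ l then a*(a+1) + b*(b+1) else 0)
      = 2 * ∑ a ∈ range (l+1), (a*(a+1)*(l+1-a)) := by
    have split : ∀ a b : ℕ, (if a+b ≤ l then a*(a+1) + b*(b+1) else 0)
        = (if a+b ≤ l then a*(a+1) else 0) + (if a+b ≤ l then b*(b+1) else 0) := by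
      intro a b; split_ifs <;> simp
    have h1 : ∑ a ∈ range (l+1), ∑ b ∈ range (l+1), (if a+b ≤ l then a*(a+1) else 0)
        = ∑ a ∈ range (l+1), (a*(a+1)*(l+1-a)) := by
      refine Finset.sum_congr rfl fun a _ => ?_
      rw [← countd l a, Finset.mul_sum]
      refine Finset.sum_congr rfl fun b _ => ?_
      split_ifs <;> simp
    have h2 : ∑ a ∈ range (l+1), ∑ b ∈ range (l+1), (if a+b ≤ l then b*(b+1) else 0)
        = ∑ a ∈ range (l+1), (a*(a+1)*(l+1-a)) := by
      rw [Finset.sum_comm]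
      refine Finset.sum_congr rfl fun b _ => ?_
      have hcomm : ∑ a ∈ range (l+1), (if a+b ≤ l then b*(b+1) else 0)
          = ∑ a ∈ range (l+1), (if b+a ≤ l then b*(b+1) else 0) := by
        refine Finset.sum_congr rfl fun a _ => ?_
        rw [add_comm a b]
      rw [hcomm, ← countd l b, Finset.mul_sum]
      refine Finset.sum_congr rfl fun a _ => ?_
      split_ifs <;> simp
    calc ∑ a ∈ range (l+1), ∑ b ∈ range (l+1), (if a+b ≤ l then a*(a+1) + b*(b+1) else 0)
        = ∑ a ∈ range (l+1), ∑ b ∈ range (l+1),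
            ((if a+b ≤ l then a*(a+1) else 0) + (if a+b ≤ l then b*(b+1) else 0)) := by
          exact Finset.sum_congr rfl fun a _ => Finset.sum_congr rfl fun b _ => split a b
      _ = 2 * ∑ a ∈ range (l+1), (a*(a+1)*(l+1-a)) := by
          rw [Finset.sum_congr rfl fun a _ => Finset.sum_add_distrib, Finset.sum_add_distrib,
            h1, h2, two_mul]
  rw [hR, hM] at hsum
  have hT := countT l
  have hD := sumD l
  nlinarith [hsum, hT, hD]

private def eqv (l : ℕ) :
    {A : Matrix (Fin 2) (Fin 2) ℕ // (∀ i, ∑ j', A i j' ≤ l) ∧ (∀ j', ∑ i, A i j' ≤ l)} ≃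
    {p : (ℕ × ℕ) × ℕ × ℕ //
      p.1.1 + p.1.2 ≤ l ∧ p.2.1 + p.2.2 ≤ l ∧ p.1.1 + p.2.1 ≤ l ∧ p.1.2 + p.2.2 ≤ l} where
  toFun A := ⟨((A.1 0 0, A.1 0 1), (A.1 1 0, A.1 1 1)), by
    obtain ⟨A, hr, hc⟩ := A
    exact ⟨by simpa [Fin.sum_univ_two] using hr 0, by simpa [Fin.sum_univ_two] using hr 1,
           by simpa [Fin.sum_univ_two] using hc 0, by simpa [Fin.sum_univ_two] using hc 1⟩⟩
  invFun p := ⟨Matrix.of ![![p.1.1.1, p.1.1.2], ![p.1.2.1, p.1.2.2]], by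
    obtain ⟨⟨⟨a, b⟩, c, d⟩, h1, h2, h3, h4⟩ := p
    constructor
    · intro i; fin_cases i <;> simpa [Fin.sum_univ_two]
    · intro j; fin_cases j <;> simpa [Fin.sum_univ_two]⟩
  left_inv A := by
    obtain ⟨A, hA⟩ := A
    ext i j
    fin_cases i <;> fin_cases j <;> rfl
  right_inv p := by
    obtain ⟨⟨⟨a, b⟩, c, d⟩, h⟩ := p
    rfl

private lemma stepA (l : ℕ) :
    G 2 l = ∑ a ∈ range (l+1), ∑ b ∈ range (l+1), ∑ c ∈ range (l+1), ∑ d ∈ range (l+1),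
      (if a+b ≤ l ∧ c+d ≤ l ∧ a+c ≤ l ∧ b+d ≤ l then 1 else 0) := by
  classical
  have hsum : ∑ a ∈ range (l+1), ∑ b ∈ range (l+1), ∑ c ∈ range (l+1), ∑ d ∈ range (l+1),
      (if a+b ≤ l ∧ c+d ≤ l ∧ a+c ≤ l ∧ b+d ≤ l then 1 else 0)
      = (((range (l+1) ×ˢ range (l+1)) ×ˢ (range (l+1) ×ˢ range (l+1))).filter
          (fun p : (ℕ × ℕ) × ℕ × ℕ =>
            p.1.1 + p.1.2 ≤ l ∧ p.2.1 + p.2.2 ≤ l ∧ p.1.1 + p.2.1 ≤ l ∧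
              p.1.2 + p.2.2 ≤ l)).card := by
    rw [Finset.card_filter]
    rw [Finset.sum_product]
    simp only [Finset.sum_product]
  rw [hsum, ← Nat.card_eq_finsetCard]
  rw [show G 2 l = _ from Nat.card_congr (eqv l)]
  apply Nat.card_congr
  apply Equiv.subtypeEquivRight
  intro p
  simp only [Finset.mem_filter, Finset.mem_coe, Finset.mem_product, Finset.mem_range]
  constructor
  · intro h; exact ⟨⟨⟨by omega, by omega⟩, by omega, by omega⟩, h⟩
  · intro h; exact h.2

theorem G_two (l : ℕ) : 6 * G 2 l = (l + 1) * (l + 2) * (l ^ 2 + 3 * l + 3) := by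
  have h := key l
  rw [← stepA l] at h
  have h2 : 12 * G 2 l = 2 * ((l + 1) * (l + 2) * (l ^ 2 + 3 * l + 3)) := by
    rw [h]; ring
  have h3 : 2 * (6 * G 2 l) = 2 * ((l + 1) * (l + 2) * (l ^ 2 + 3 * l + 3)) := by
    rw [← h2]; ring
  exact Nat.eq_of_mul_eq_mul_left (by norm_num) h3
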